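/- Let E: ℝ^N_{>0} → ℝ be convex and nondecreasing in each argument, and let each argument be hᵢ(xᵢ) = cᵢ·(2^{1/xᵢ} - 1)·xᵢ with cᵢ > 0. Then the composite function (x₁, …, x_N) ↦ E(h₁(x₁), …, h_N(x_N)) is convex on (0, ∞)^N, and hence the optimization problem minimizing it subject to the linear constraints ∑ᵢ Rᵢ^min·xᵢ = 1 and xᵢ ≥ 1/r̄ᵢ is a convex optimization problem. -/

import Mathlib

private lemma pos_comb {p q x y : ℝ} (hp : 0 ≤ p) (hq : 0 ≤ q) (hpq : p + q = 1)
    (hx : 0 < x) (hy : 0 < y) : 0 < p * x + q * y := by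
  rcases lt_or_eq_of_le hp with h | h
  · nlinarith [mul_nonneg hq hy.le]
  · have hq1 : q = 1 := by linarith
    nlinarith

private lemma persp (a : ℝ) :
    ConvexOn ℝ (Set.Ioi (0:ℝ)) (fun x => x * Real.exp (a / x)) := by
  refine ⟨convex_Ioi 0, ?_⟩
  intro x hx y hy p q hp hq hpq
  simp only [Set.mem_Ioi] at hx hy
  simp only [smul_eq_mul]
  set z := p * x + q * y with hz
  have hz0 : 0 < z := pos_comb hp hq hpq hx hy
  have key := convexOn_exp.2 (Set.mem_univ (a/x)) (Set.mem_univ (a/y))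
    (div_nonneg (mul_nonneg hp hx.le) hz0.le)
    (div_nonneg (mul_nonneg hq hy.le) hz0.le)
    (by field_simp; exact hz.symm)
  simp only [smul_eq_mul] at key
  have harg : p * x / z * (a / x) + q * y / z * (a / y) = a / z := by
    have h1 : p * x / z * (a / x) = p * (a / z) := by field_simp
    have h2 : q * y / z * (a / y) = q * (a / z) := by field_simp
    rw [h1, h2, ← add_mul, hpq, one_mul]
  rw [harg] at key
  have := mul_le_mul_of_nonneg_left key hz0.le
  calc z * Real.exp (a / z)
      ≤ z * (p * x / z * Real.exp (a / x) + q * y / z * Real.exp (a / y)) := this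
    _ = p * (x * Real.exp (a / x)) + q * (y * Real.exp (a / y)) := by
        field_simp

private lemma hconv {c : ℝ} (hc : 0 < c) :
    ConvexOn ℝ (Set.Ioi (0:ℝ)) (fun x => c * ((2:ℝ) ^ (1 / x) - 1) * x) := by
  have heq : (fun x : ℝ => c * ((2:ℝ) ^ (1 / x) - 1) * x)
      = fun x => c * (x * Real.exp (Real.log 2 / x)) - c * x := by
    funext x
    rw [Real.rpow_def_of_pos (by norm_num : (0:ℝ) < 2), mul_one_div]
    ring
  rw [heq]
  have h1 : ConvexOn ℝ (Set.Ioi (0:ℝ)) (fun x => c * (x * Real.exp (Real.log 2 / x))) := by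
    have := (persp (Real.log 2)).smul hc.le
    simpa [smul_eq_mul] using this
  have h2 : ConcaveOn ℝ (Set.Ioi (0:ℝ)) (fun x : ℝ => c * x) := by
    refine ⟨convex_Ioi 0, ?_⟩
    intro x _ y _ p q hp hq hpq
    simp only [smul_eq_mul]
    apply le_of_eq
    ring
  exact h1.sub h2

private lemma hpos {c x : ℝ} (hc : 0 < c) (hx : 0 < x) :
    0 < c * ((2:ℝ) ^ (1 / x) - 1) * x := by
  have h2 : (1:ℝ) < (2:ℝ) ^ (1 / x) := by
    rw [Real.one_lt_rpow_iff_of_pos (by norm_num : (0:ℝ) < 2)]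
    exact Or.inl ⟨one_lt_two, by positivity⟩
  have := sub_pos.2 h2
  positivity

theorem stmt_17 (N : ℕ) (E : (Fin N → ℝ) → ℝ) (c Rmin rbar : Fin N → ℝ)
    (hc : ∀ i, 0 < c i) (hRmin : ∀ i, 0 < Rmin i) (hrbar : ∀ i, 0 < rbar i)
    (hEconv : ConvexOn ℝ {P : Fin N → ℝ | ∀ i, 0 < P i} E)
    (hEmono : ∀ P Q : Fin N → ℝ, (∀ i, 0 < P i) → (∀ i, 0 < Q i) →
      (∀ i, P i ≤ Q i) → E P ≤ E Q) :
    ConvexOn ℝ {x : Fin N → ℝ | ∀ i, 0 < x i}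
      (fun x => E (fun i => c i * ((2:ℝ) ^ (1 / x i) - 1) * x i)) ∧
    Convex ℝ {x : Fin N → ℝ | (∑ i, Rmin i * x i = 1) ∧ ∀ i, 1 / rbar i ≤ x i} := by
  constructor
  · refine ⟨?_, ?_⟩
    · intro x hx y hy p q hp hq hpq i
      exact pos_comb hp hq hpq (hx i) (hy i)
    · intro x hx y hy p q hp hq hpq
      simp only [Set.mem_setOf_eq] at hx hy
      simp only [smul_eq_mul]
      set Px : Fin N → ℝ := fun i => c i * ((2:ℝ) ^ (1 / x i) - 1) * x i with hPx
      set Py : Fin N → ℝ := fun i => c i * ((2:ℝ) ^ (1 / y i) - 1) * y i with hPy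
      have hPxpos : ∀ i, 0 < Px i := fun i => hpos (hc i) (hx i)
      have hPypos : ∀ i, 0 < Py i := fun i => hpos (hc i) (hy i)
      have hzpos : ∀ i, 0 < (p • x + q • y) i := by
        intro i
        simpa [smul_eq_mul] using pos_comb hp hq hpq (hx i) (hy i)
      have hmid : ∀ i, c i * ((2:ℝ) ^ (1 / (p • x + q • y) i) - 1) * (p • x + q • y) i
          ≤ p * Px i + q * Py i := by
        intro i
        have := (hconv (hc i)).2 (Set.mem_Ioi.2 (hx i)) (Set.mem_Ioi.2 (hy i)) hp hq hpq
        simpa only [Pi.add_apply, Pi.smul_apply, smul_eq_mul] using this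
      have hmidpos : ∀ i, 0 < c i * ((2:ℝ) ^ (1 / (p • x + q • y) i) - 1) * (p • x + q • y) i :=
        fun i => hpos (hc i) (hzpos i)
      have hcombpos : ∀ i, 0 < p * Px i + q * Py i :=
        fun i => pos_comb hp hq hpq (hPxpos i) (hPypos i)
      calc E (fun i => c i * ((2:ℝ) ^ (1 / (p • x + q • y) i) - 1) * (p • x + q • y) i)
          ≤ E (fun i => p * Px i + q * Py i) :=
            hEmono _ _ hmidpos hcombpos hmid
        _ = E (p • Px + q • Py) := rfl
        _ ≤ p * E Px + q * E Py := hEconv.2 hPxpos hPypos hp hq hpq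
  · intro x hx y hy p q hp hq hpq
    obtain ⟨hx1, hx2⟩ := hx
    obtain ⟨hy1, hy2⟩ := hy
    constructor
    · have : ∑ i, Rmin i * (p • x + q • y) i
          = p * ∑ i, Rmin i * x i + q * ∑ i, Rmin i * y i := by
        rw [Finset.mul_sum, Finset.mul_sum, ← Finset.sum_add_distrib]
        apply Finset.sum_congr rfl
        intro i _
        simp [smul_eq_mul]
        ring
      rw [this, hx1, hy1]
      linarith
    · intro i
      have h1 : 1 / rbar i = p * (1 / rbar i) + q * (1 / rbar i) := by
        rw [← add_mul, hpq, one_mul]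
      simp only [Pi.add_apply, Pi.smul_apply, smul_eq_mul]
      calc 1 / rbar i = p * (1 / rbar i) + q * (1 / rbar i) := h1
        _ ≤ p * x i + q * y i := by
            apply add_le_add
            · exact mul_le_mul_of_nonneg_left (hx2 i) hp
            · exact mul_le_mul_of_nonneg_left (hy2 i) hq
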